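/- Fix h > 0 and let f(k) = √(k² + h²) denote the branch that is holomorphic on ℂ \ [−ih, ih] and satisfies f(k) = k(1 + o(1)) as |k| → ∞. Then f is a conformal (holomorphic bijective) mapping from ℂ \ [−ih, ih] onto ℂ \ [−h, h], and for every r > 0 one has the inclusion S_r \ [−h, h] ⊆ f(S_r \ [−ih, ih]), where S_r = {z ∈ ℂ : |Re z| < r}. -/

import Mathlib

set_option maxHeartbeats 1000000


open Complex Filter Set

noncomputable section


lemma seg_char (h : ℝ) (hh : 0 < h) (z : ℂ) :
    z ∈ segment ℝ (-(h : ℂ) * Complex.I) ((h : ℂ) * Complex.I) ↔ z.re = 0 ∧ |z.im| ≤ h := by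
  constructor
  · rintro ⟨a, b, ha, hb, hab, rfl⟩
    constructor
    · simp [Complex.add_re, Complex.smul_re]
    · simp only [Complex.add_im, Complex.smul_im, Complex.mul_im, Complex.neg_im,
        Complex.ofReal_re, Complex.ofReal_im, Complex.I_im, Complex.I_re, Complex.neg_re,
        smul_eq_mul]
      rw [abs_le]
      constructor <;> nlinarith
  · rintro ⟨hre, him⟩
    rw [abs_le] at him
    have h1 : -1 ≤ z.im / h := by rw [le_div_iff₀ hh]; linarith
    have h2 : z.im / h ≤ 1 := by rw [div_le_one hh]; linarith
    refine ⟨(1 - z.im / h) / 2, (1 + z.im / h) / 2, by linarith, by linarith, by ring, ?_⟩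
    apply Complex.ext <;>
      simp [Complex.smul_re, Complex.smul_im, Complex.mul_im, Complex.mul_re, hre] <;>
      field_simp <;> ring

lemma icc_char (h : ℝ) (w : ℂ) :
    w ∈ (fun x : ℝ => (x : ℂ)) '' Set.Icc (-h) h ↔ w.im = 0 ∧ |w.re| ≤ h := by
  constructor
  · rintro ⟨x, hx, rfl⟩
    exact ⟨rfl, abs_le.2 ⟨hx.1, hx.2⟩⟩
  · rintro ⟨h0, hle⟩
    rw [abs_le] at hle
    exact ⟨w.re, ⟨hle.1, hle.2⟩, by apply Complex.ext <;> simp [h0]⟩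

lemma D_preconn (h : ℝ) (hh : 0 < h) :
    IsPreconnected (segment ℝ (-(h : ℂ) * Complex.I) ((h : ℂ) * Complex.I))ᶜ := by
  have hP : IsPreconnected {z : ℂ | 0 < z.re} := (convex_halfSpace_re_gt 0).isPreconnected
  have hN : IsPreconnected {z : ℂ | z.re < 0} := (convex_halfSpace_re_lt 0).isPreconnected
  have hT : IsPreconnected {z : ℂ | h < z.im} := (convex_halfSpace_im_gt h).isPreconnected
  have hB : IsPreconnected {z : ℂ | z.im < -h} := (convex_halfSpace_im_lt (-h)).isPreconnected
  have h1 : IsPreconnected ({z : ℂ | 0 < z.re} ∪ {z : ℂ | h < z.im}) :=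
    IsPreconnected.union (⟨1, h + 1⟩ : ℂ) (by norm_num) (by simp) hP hT
  have h2 : IsPreconnected (({z : ℂ | 0 < z.re} ∪ {z : ℂ | h < z.im}) ∪ {z : ℂ | z.re < 0}) :=
    IsPreconnected.union (⟨-1, h + 1⟩ : ℂ) (by right; simp) (by norm_num) h1 hN
  have h3 : IsPreconnected ((({z : ℂ | 0 < z.re} ∪ {z : ℂ | h < z.im}) ∪ {z : ℂ | z.re < 0})
      ∪ {z : ℂ | z.im < -h}) :=
    IsPreconnected.union (⟨1, -h - 1⟩ : ℂ) (by left; left; norm_num) (by simp only [Set.mem_setOf_eq]; norm_num) h2 hB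
  convert h3 using 1
  ext z
  simp only [Set.mem_compl_iff, seg_char h hh, Set.mem_union, Set.mem_setOf_eq, not_and_or,
    not_le, lt_abs, lt_neg]
  constructor
  · rintro (hre | him | him)
    · rcases lt_or_gt_of_ne hre with h' | h'
      · left; right; exact h'
      · left; left; left; exact h'
    · left; left; right; exact him
    · right; linarith
  · rintro (((h' | h') | h') | h')
    · left; exact ne_of_gt h'
    · right; left; exact h'
    · left; exact ne_of_lt h'
    · right; right; linarith

/-- Fix `h > 0` and let `f` be the branch of `√(k² + h²)` holomorphic
on `ℂ \ [−ih, ih]` with `f(k) = k(1 + o(1))` as `|k| → ∞`. Then `f` is a conformal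
(holomorphic bijective) map from `ℂ \ [−ih, ih]` onto `ℂ \ [−h, h]`, and for every
`r > 0` one has `S_r \ [−h, h] ⊆ f(S_r \ [−ih, ih])`, where `S_r = {z : |Re z| < r}`. -/
theorem sqrt_sq_add_sq_conformal_strip (h : ℝ) (hh : 0 < h) (f : ℂ → ℂ)
    (hholo : DifferentiableOn ℂ f (segment ℝ (-(h : ℂ) * Complex.I) ((h : ℂ) * Complex.I))ᶜ)
    (hsq : ∀ k ∈ (segment ℝ (-(h : ℂ) * Complex.I) ((h : ℂ) * Complex.I))ᶜ,
      f k ^ 2 = k ^ 2 + (h : ℂ) ^ 2)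
    (hasymp : Filter.Tendsto (fun k : ℂ => f k / k) (Bornology.cobounded ℂ) (nhds 1)) :
    Set.BijOn f (segment ℝ (-(h : ℂ) * Complex.I) ((h : ℂ) * Complex.I))ᶜ
      ((fun x : ℝ => (x : ℂ)) '' Set.Icc (-h) h)ᶜ ∧
    ∀ r > 0, {z : ℂ | |z.re| < r} \ (fun x : ℝ => (x : ℂ)) '' Set.Icc (-h) h ⊆
      f '' ({z : ℂ | |z.re| < r} \ segment ℝ (-(h : ℂ) * Complex.I) ((h : ℂ) * Complex.I)) := by
  set S := segment ℝ (-(h : ℂ) * Complex.I) ((h : ℂ) * Complex.I) with hS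
  -- basic facts
  have hScompact : IsCompact S := by
    rw [hS, segment_eq_image]
    exact isCompact_Icc.image (by continuity)
  have hopen : IsOpen Sᶜ := hScompact.isClosed.isOpen_compl
  have hcont : ContinuousOn f Sᶜ := hholo.continuousOn
  have hmemD : ∀ z : ℂ, z ∈ Sᶜ ↔ ¬(z.re = 0 ∧ |z.im| ≤ h) := by
    intro z; rw [Set.mem_compl_iff, hS, seg_char h hh]
  have hneg : ∀ k : ℂ, k ∈ Sᶜ → -k ∈ Sᶜ := by
    intro k hk
    rw [hmemD] at hk ⊢
    simpa [neg_eq_zero, abs_neg] using hk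
  have hfne : ∀ k ∈ Sᶜ, f k ≠ 0 := by
    intro k hk hf0
    have e := hsq k hk
    rw [hf0] at e
    have : (k - (h : ℂ) * Complex.I) * (k + (h : ℂ) * Complex.I) = 0 := by
      linear_combination e.symm - (h:ℂ)^2 * Complex.I_sq
    rcases mul_eq_zero.1 this with h' | h'
    · have : k = (h : ℂ) * Complex.I := by linear_combination h'
      rw [hmemD] at hk
      exact hk (by rw [this]; constructor <;> simp [_root_.abs_of_pos hh, hh.le])
    · have : k = -(h : ℂ) * Complex.I := by linear_combination h'
      rw [hmemD] at hk
      exact hk (by rw [this]; constructor <;> simp [_root_.abs_of_pos hh, hh.le])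
  -- oddness
  have hprod : ∀ k ∈ Sᶜ, (f (-k) - f k) * (f (-k) + f k) = 0 := by
    intro k hk
    have e1 := hsq k hk
    have e2 := hsq (-k) (hneg k hk)
    linear_combination e2 - e1
  have hodd : ∀ k ∈ Sᶜ, f (-k) = -f k := by
    have hcontn : ContinuousOn (fun k => f (-k)) Sᶜ :=
      hcont.comp continuous_neg.continuousOn (fun k hk => hneg k hk)
    set U := Sᶜ ∩ (fun k => f (-k) - f k) ⁻¹' ({0}ᶜ) with hU
    set V := Sᶜ ∩ (fun k => f (-k) + f k) ⁻¹' ({0}ᶜ) with hV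
    have hUopen : IsOpen U :=
      (hcontn.sub hcont).isOpen_inter_preimage hopen isOpen_compl_singleton
    have hVopen : IsOpen V :=
      (hcontn.add hcont).isOpen_inter_preimage hopen isOpen_compl_singleton
    have hdisj : Disjoint U V := by
      rw [Set.disjoint_left]
      rintro k ⟨hk, hk1⟩ ⟨-, hk2⟩
      have := hprod k hk
      rcases mul_eq_zero.1 this with h' | h'
      · exact hk1 h'
      · exact hk2 h'
    have hsub : Sᶜ ⊆ U ∪ V := by
      intro k hk
      by_cases hc : f (-k) - f k = 0
      · right
        refine ⟨hk, ?_⟩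
        intro hc2
        simp only [Set.mem_singleton_iff] at hc2
        have : f k = 0 := by linear_combination (hc2 - hc) / 2
        exact hfne k hk this
      · exact Or.inl ⟨hk, hc⟩
    -- find a point in U
    have htR : Filter.Tendsto (fun R : ℝ => ((R : ℂ))) atTop (Bornology.cobounded ℂ) := by
      rw [← tendsto_norm_atTop_iff_cobounded]
      simpa [Complex.norm_real] using tendsto_abs_atTop_atTop
    have htRn : Filter.Tendsto (fun R : ℝ => (-(R : ℂ))) atTop (Bornology.cobounded ℂ) := by
      rw [← tendsto_norm_atTop_iff_cobounded]
      simpa [Complex.norm_real] using tendsto_abs_atTop_atTop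
    have t1 : Filter.Tendsto (fun R : ℝ => f R / R) atTop (nhds 1) := hasymp.comp htR
    have t2 : Filter.Tendsto (fun R : ℝ => f (-(R:ℂ)) / (-(R:ℂ))) atTop (nhds 1) :=
      hasymp.comp htRn
    have ev1 : ∀ᶠ R : ℝ in atTop, ‖f R / R - 1‖ < 1/2 := by
      have := Metric.tendsto_nhds.1 t1 (1/2) (by norm_num)
      simpa [dist_eq_norm] using this
    have ev2 : ∀ᶠ R : ℝ in atTop, ‖f (-(R:ℂ)) / (-(R:ℂ)) - 1‖ < 1/2 := by
      have := Metric.tendsto_nhds.1 t2 (1/2) (by norm_num)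
      simpa [dist_eq_norm] using this
    obtain ⟨R, hR1, hR2, hRgt⟩ := (ev1.and (ev2.and (eventually_gt_atTop (1:ℝ)))).exists
    have hRD : (R : ℂ) ∈ Sᶜ := by
      rw [hmemD]
      rintro ⟨hre, -⟩
      simp only [Complex.ofReal_re] at hre
      linarith
    have hRU : (R : ℂ) ∈ U := by
      refine ⟨hRD, ?_⟩
      intro hc
      simp only [Set.mem_preimage, Set.mem_singleton_iff] at hc
      have heqf : f (-(R:ℂ)) = f (R:ℂ) := by linear_combination hc
      have hRne : (R : ℂ) ≠ 0 := by
        simp only [ne_eq, Complex.ofReal_eq_zero]; linarith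
      have hval : f (-(R:ℂ)) / (-(R:ℂ)) = -(f (R:ℂ) / (R:ℂ)) := by
        rw [heqf, div_neg]
      rw [hval] at hR2
      have h2 : (f (R:ℂ) / (R:ℂ) - 1) + (-(f (R:ℂ) / (R:ℂ)) - 1) = -2 := by ring
      have : (2 : ℝ) ≤ ‖f (R:ℂ) / (R:ℂ) - 1‖ + ‖-(f (R:ℂ) / (R:ℂ)) - 1‖ := by
        calc (2 : ℝ) = ‖(f (R:ℂ) / (R:ℂ) - 1) + (-(f (R:ℂ) / (R:ℂ)) - 1)‖ := by rw [h2]; simp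
          _ ≤ _ := norm_add_le _ _
      linarith
    have hDU : Sᶜ ⊆ U :=
      (D_preconn h hh).subset_left_of_subset_union hUopen hVopen hdisj hsub ⟨(R:ℂ), hRD, hRU⟩
    intro k hk
    have hkU := hDU hk
    have := hprod k hk
    rcases mul_eq_zero.1 this with h' | h'
    · exact absurd h' hkU.2
    · linear_combination h'
  -- maps to
  have hmaps : Set.MapsTo f Sᶜ ((fun x : ℝ => (x : ℂ)) '' Set.Icc (-h) h)ᶜ := by
    intro k hk hmem
    rw [icc_char] at hmem
    obtain ⟨him0, hrele⟩ := hmem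
    set x := (f k).re with hx
    have hfx : f k = (x : ℂ) := by
      apply Complex.ext <;> simp [him0, hx]
    have hk2 : k ^ 2 = (x : ℂ) ^ 2 - (h : ℂ) ^ 2 := by
      have := hsq k hk
      rw [hfx] at this
      linear_combination -this
    have hx2 : x ^ 2 ≤ h ^ 2 := by
      have := abs_le.1 hrele
      nlinarith
    set t := Real.sqrt (h ^ 2 - x ^ 2) with ht
    have ht2 : t ^ 2 = h ^ 2 - x ^ 2 := Real.sq_sqrt (by linarith)
    have htnn : 0 ≤ t := Real.sqrt_nonneg _
    have hth : t ≤ h := by nlinarith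
    have hfac : (k - (t : ℂ) * Complex.I) * (k + (t : ℂ) * Complex.I) = 0 := by
      have hc : ((t : ℂ)) ^ 2 = (h : ℂ) ^ 2 - (x : ℂ) ^ 2 := by
        have := congrArg (fun r : ℝ => (r : ℂ)) ht2
        push_cast at this
        exact this
      linear_combination hk2 + hc - ((t : ℂ)) ^ 2 * Complex.I_sq
    rcases mul_eq_zero.1 hfac with h' | h'
    · have hkt : k = (t : ℂ) * Complex.I := by linear_combination h'
      rw [hmemD] at hk
      exact hk (by rw [hkt]; constructor <;> simp [_root_.abs_of_nonneg htnn, hth]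
        )
    · have hkt : k = -(t : ℂ) * Complex.I := by linear_combination h'
      rw [hmemD] at hk
      exact hk (by rw [hkt]; constructor <;> simp [_root_.abs_of_nonneg htnn, hth]
        )
  -- injectivity
  have hinj : Set.InjOn f Sᶜ := by
    intro k1 h1 k2 h2 heq
    have e1 := hsq k1 h1
    have e2 := hsq k2 h2
    have : (k1 - k2) * (k1 + k2) = 0 := by
      rw [heq] at e1
      linear_combination e2 - e1
    rcases mul_eq_zero.1 this with h' | h'
    · linear_combination h'
    · exfalso
      have hk1 : k1 = -k2 := by linear_combination h'
      rw [hk1, hodd k2 h2] at heq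
      exact hfne k2 h2 (by linear_combination -heq / 2)
  -- key: preimage of any w outside [-h,h]
  have hsurj : ∀ w : ℂ, w ∉ (fun x : ℝ => (x : ℂ)) '' Set.Icc (-h) h →
      ∃ k ∈ Sᶜ, f k = w ∧ |k.re| ≤ |w.re| := by
    intro w hw
    obtain ⟨k, hk2⟩ := IsAlgClosed.exists_pow_nat_eq (w ^ 2 - (h : ℂ) ^ 2) (n := 2) (by norm_num)
    -- k is not in the segment (nor is -k)
    have hknot : ¬(k.re = 0 ∧ |k.im| ≤ h) := by
      rintro ⟨hre0, him⟩
      have hkim : k = (k.im : ℂ) * Complex.I := by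
        apply Complex.ext <;> simp [hre0]
      have hcnn : (0:ℝ) ≤ h ^ 2 - k.im ^ 2 := by
        have := abs_le.1 him
        nlinarith
      have hw2 : w ^ 2 = ((h ^ 2 - k.im ^ 2 : ℝ) : ℂ) := by
        rw [hkim] at hk2
        push_cast
        linear_combination -hk2 + (k.im:ℂ)^2 * Complex.I_sq
      set s := Real.sqrt (h ^ 2 - k.im ^ 2) with hs
      have hs2 : s ^ 2 = h ^ 2 - k.im ^ 2 := Real.sq_sqrt hcnn
      have hsh : s ≤ h := by
        have : 0 ≤ s := Real.sqrt_nonneg _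
        nlinarith
      have hfac : (w - (s : ℂ)) * (w + (s : ℂ)) = 0 := by
        have hcast : ((s : ℂ)) ^ 2 = ((h ^ 2 - k.im ^ 2 : ℝ) : ℂ) := by
          have := congrArg (fun r : ℝ => (r : ℂ)) hs2
          push_cast at this
          exact_mod_cast this
        linear_combination hw2 - hcast
      have hsnn : 0 ≤ s := Real.sqrt_nonneg _
      rcases mul_eq_zero.1 hfac with h' | h'
      · have : w = (s : ℂ) := by linear_combination h'
        exact hw (by rw [this, icc_char]; constructor <;> simp [_root_.abs_of_nonneg hsnn, hsh])
      · have : w = -(s : ℂ) := by linear_combination h'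
        exact hw (by rw [this, icc_char]; constructor <;> simp [_root_.abs_of_nonneg hsnn, hsh])
    have hkD : k ∈ Sᶜ := by rw [hmemD]; exact hknot
    have hknD : -k ∈ Sᶜ := hneg k hkD
    -- |Re k| ≤ |Re w|
    have hbound : |k.re| ≤ |w.re| := by
      have hre := congrArg Complex.re hk2
      have him := congrArg Complex.im hk2
      simp only [pow_two, Complex.mul_re, Complex.mul_im, Complex.sub_re, Complex.sub_im,
        Complex.ofReal_re, Complex.ofReal_im, mul_zero, zero_mul, sub_zero, add_zero] at hre him
      set a := k.re with hadef
      set b := k.im with hbdef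
      set c := w.re with hcdef
      set d := w.im with hddef
      have ha : a ^ 2 - b ^ 2 = c ^ 2 - d ^ 2 - h ^ 2 := by linear_combination hre
      have hab : a * b = c * d := by linear_combination him / 2
      have key : (a ^ 2 + d ^ 2) * (a ^ 2 - c ^ 2) = -(a ^ 2 * h ^ 2) := by
        linear_combination a ^ 2 * ha + (a * b + c * d) * hab
      have hsq2 : a ^ 2 ≤ c ^ 2 := by
        by_contra hlt
        push_neg at hlt
        nlinarith [sq_nonneg d, sq_nonneg a, sq_nonneg (a * h), mul_pos hh hh]
      rw [← Real.sqrt_sq_eq_abs, ← Real.sqrt_sq_eq_abs]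
      exact Real.sqrt_le_sqrt hsq2
    -- f k = ± w
    have hfk2 : f k ^ 2 = w ^ 2 := by
      have := hsq k hkD
      rw [hk2] at this
      linear_combination this
    have : (f k - w) * (f k + w) = 0 := by linear_combination hfk2
    rcases mul_eq_zero.1 this with h' | h'
    · exact ⟨k, hkD, by linear_combination h', hbound⟩
    · refine ⟨-k, hknD, ?_, by simpa using hbound⟩
      rw [hodd k hkD]
      linear_combination -h'
  refine ⟨⟨hmaps, hinj, fun w hw => ?_⟩, fun r hr w hw => ?_⟩
  · obtain ⟨k, hkD, hfk, -⟩ := hsurj w hw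
    exact ⟨k, hkD, hfk⟩
  · obtain ⟨k, hkD, hfk, hb⟩ := hsurj w hw.2
    exact ⟨k, ⟨lt_of_le_of_lt hb hw.1, hkD⟩, hfk⟩
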